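/- Let g : ℝ^d → ℝ be a convex function, let X ⊆ ℝ^d be a compact convex set, and let ε > 0. Then there exists a max-affine function h : ℝ^d → ℝ such that the Lebesgue measure of the set {x ∈ X : sign classifications disagree}, i.e., of {x ∈ X : (h(x) > 0) ↮ (g(x) > 0)}, is less than ε. -/

import Mathlib

open MeasureTheory

/-- A *max-affine* function on ℝ^d: `h x = max_{i ∈ I} (⟪aᵢ, x⟫ + bᵢ)` for a nonempty finite
index set; such functions are exactly those realized by input-convex ReLU neural networks. -/
def MaxAffine {d : ℕ} (h : EuclideanSpace ℝ (Fin d) → ℝ) : Prop :=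
  ∃ (n : ℕ) (a : Fin (n + 1) → EuclideanSpace ℝ (Fin d)) (b : Fin (n + 1) → ℝ),
    ∀ x, h x = Finset.univ.sup' Finset.univ_nonempty
      (fun i : Fin (n + 1) => (inner ℝ (a i) x : ℝ) + b i)

/-- Every convex function on all of `ℝ^d` has, at each point `x₀`, an affine minorant whose
value at `x₀` is within `δ` of `g x₀` (a supporting-hyperplane statement, obtained by
separating a point below the epigraph from the closed epigraph). -/
lemma exists_affine_minorant {d : ℕ} {g : EuclideanSpace ℝ (Fin d) → ℝ}
    (hg : ConvexOn ℝ Set.univ g) (hgc : Continuous g)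
    (x0 : EuclideanSpace ℝ (Fin d)) {δ : ℝ} (hδ : 0 < δ) :
    ∃ (a : EuclideanSpace ℝ (Fin d)) (b : ℝ),
      (∀ x, (inner ℝ a x : ℝ) + b ≤ g x) ∧ g x0 - δ < (inner ℝ a x0 : ℝ) + b := by
  classical
  set T : Set (EuclideanSpace ℝ (Fin d) × ℝ) :=
    {p | p.1 ∈ (Set.univ : Set (EuclideanSpace ℝ (Fin d))) ∧ g p.1 ≤ p.2} with hT
  have hTconv : Convex ℝ T := hg.convex_epigraph
  have hTclosed : IsClosed T := by
    have heq : T = {p : EuclideanSpace ℝ (Fin d) × ℝ | g p.1 ≤ p.2} := by ext p; simp [hT]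
    rw [heq]
    exact isClosed_le (hgc.comp continuous_fst) continuous_snd
  have hp0 : (x0, g x0 - δ) ∉ T := by
    intro hmem
    have : g x0 ≤ g x0 - δ := hmem.2
    linarith
  obtain ⟨f, u, hfu, hfT⟩ := geometric_hahn_banach_point_closed hTconv hTclosed hp0
  -- decompose `f` as `f (x, t) = φ x + t * α`
  set φ : EuclideanSpace ℝ (Fin d) → ℝ := fun x => f (x, 0) with hφ
  set α : ℝ := f ((0 : EuclideanSpace ℝ (Fin d)), (1 : ℝ)) with hα
  have hdec : ∀ (x : EuclideanSpace ℝ (Fin d)) (t : ℝ), f (x, t) = φ x + t * α := by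
    intro x t
    have hxt : (x, t) = (x, 0) + t • ((0 : EuclideanSpace ℝ (Fin d)), (1 : ℝ)) := by
      simp [Prod.ext_iff]
    rw [hxt, map_add, f.map_smul]
    simp [hφ, hα, smul_eq_mul]
  have hαpos : 0 < α := by
    have h1 : f (x0, g x0 - δ) < u := hfu
    have h2 : u < f (x0, g x0) := hfT (x0, g x0) ⟨Set.mem_univ _, le_rfl⟩
    rw [hdec] at h1 h2
    nlinarith
  -- the affine minorant is `x ↦ (u - φ x) / α`
  set ψ : EuclideanSpace ℝ (Fin d) →L[ℝ] ℝ :=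
    (-α⁻¹) • (f.comp (ContinuousLinearMap.inl ℝ (EuclideanSpace ℝ (Fin d)) ℝ)) with hψ
  have hψx : ∀ x, ψ x = -(φ x) / α := by
    intro x
    simp [hψ, hφ, neg_div]
    ring
  refine ⟨(InnerProductSpace.toDual ℝ (EuclideanSpace ℝ (Fin d))).symm ψ, u / α, ?_, ?_⟩
  · intro x
    have h2 : u < f (x, g x) := hfT (x, g x) ⟨Set.mem_univ _, le_rfl⟩
    rw [hdec] at h2
    rw [InnerProductSpace.toDual_symm_apply, hψx]
    have key : (u - φ x) / α ≤ g x := by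
      rw [div_le_iff₀ hαpos]; nlinarith
    have : -(φ x) / α + u / α = (u - φ x) / α := by ring
    linarith
  · have h1 : f (x0, g x0 - δ) < u := hfu
    rw [hdec] at h1
    rw [InnerProductSpace.toDual_symm_apply, hψx]
    have key : g x0 - δ < (u - φ x0) / α := by
      rw [lt_div_iff₀ hαpos]; nlinarith
    have : -(φ x0) / α + u / α = (u - φ x0) / α := by ring
    linarith

/-- **Theorem 2 of the paper** (universal approximation in the classification sense):
for any convex `g : ℝ^d → ℝ`, compact convex `X ⊆ ℝ^d`, and `ε > 0`, there is a max-affine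
function `h` whose sign classification disagrees with that of `g` on a subset of `X` of
Lebesgue measure less than `ε`. -/
theorem maxAffine_classification_universal_approximation {d : ℕ}
    (g : EuclideanSpace ℝ (Fin d) → ℝ) (hg : ConvexOn ℝ Set.univ g)
    (X : Set (EuclideanSpace ℝ (Fin d))) (hX : IsCompact X) (hXconv : Convex ℝ X)
    (ε : ℝ) (hε : 0 < ε) :
    ∃ h : EuclideanSpace ℝ (Fin d) → ℝ, MaxAffine h ∧
      volume {x ∈ X | ¬((0 < h x) ↔ (0 < g x))} < ENNReal.ofReal ε := by
  classical
  have hgc : Continuous g := by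
    rw [← continuousOn_univ]
    exact hg.continuousOn isOpen_univ
  -- trivial case: `X = ∅`
  rcases X.eq_empty_or_nonempty with rfl | hXne
  · refine ⟨fun x => (inner ℝ (0 : EuclideanSpace ℝ (Fin d)) x : ℝ) + 0,
      ⟨0, fun _ => 0, fun _ => 0, fun x => by simp⟩, ?_⟩
    refine lt_of_le_of_lt (measure_mono ?_)
      (show volume (∅ : Set (EuclideanSpace ℝ (Fin d))) < ENNReal.ofReal ε by
        simpa using ENNReal.ofReal_pos.2 hε)
    intro x hx
    exact hx.1
  -- find `δ > 0` with `volume {x ∈ X | 0 < g x ≤ δ}` small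
  set S : ℕ → Set (EuclideanSpace ℝ (Fin d)) :=
    fun k => {x ∈ X | 0 < g x ∧ g x ≤ 1 / (k + 1)} with hS
  have hSmeas : ∀ k, MeasurableSet (S k) := by
    intro k
    have heq : S k = X ∩ ({x | 0 < g x} ∩ {x | g x ≤ 1 / (k + 1)}) := rfl
    rw [heq]
    exact hX.isClosed.measurableSet.inter
      ((measurableSet_lt measurable_const hgc.measurable).inter
        (measurableSet_le hgc.measurable measurable_const))
  have hSanti : Antitone S := by
    intro m n hmn x hx
    refine ⟨hx.1, hx.2.1, hx.2.2.trans ?_⟩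
    apply one_div_le_one_div_of_le (by positivity)
    have : (m : ℝ) ≤ n := Nat.cast_le.2 hmn
    linarith
  have hSempty : (⋂ k, S k) = ∅ := by
    ext x
    simp only [Set.mem_iInter, Set.mem_empty_iff_false, iff_false]
    intro hall
    obtain ⟨k, hk⟩ := exists_nat_one_div_lt (hall 0).2.1
    exact absurd ((hall k).2.2) (not_le.2 hk)
  have htend : Filter.Tendsto (volume ∘ S) Filter.atTop (nhds (volume (⋂ k, S k))) :=
    tendsto_measure_iInter_atTop (fun k => (hSmeas k).nullMeasurableSet) hSanti
      ⟨0, ((measure_mono (fun x hx => hx.1)).trans_lt hX.measure_lt_top).ne⟩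
  rw [hSempty, measure_empty] at htend
  have hev : ∀ᶠ k in Filter.atTop, volume (S k) < ENNReal.ofReal ε := by
    have := htend (Iio_mem_nhds (show (0:ENNReal) < ENNReal.ofReal ε from ENNReal.ofReal_pos.2 hε))
    filter_upwards [this] with k hk using hk
  obtain ⟨k, hk⟩ := hev.exists
  set δ : ℝ := 1 / (k + 1) with hδdef
  have hδ : 0 < δ := by positivity
  -- for each point of X, a supporting affine minorant accurate near that point
  have key : ∀ y : EuclideanSpace ℝ (Fin d), ∃ (a : EuclideanSpace ℝ (Fin d)) (b : ℝ),
      (∀ x, (inner ℝ a x : ℝ) + b ≤ g x) ∧ g y - δ / 2 < (inner ℝ a y : ℝ) + b :=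
    fun y => exists_affine_minorant hg hgc y (by linarith)
  choose A B hAB hABy using key
  set U : EuclideanSpace ℝ (Fin d) → Set (EuclideanSpace ℝ (Fin d)) :=
    fun y => {x | g x - δ < (inner ℝ (A y) x : ℝ) + B y} with hU
  have hUopen : ∀ y, IsOpen (U y) := by
    intro y
    exact isOpen_lt (hgc.sub continuous_const)
      ((continuous_const.inner continuous_id).add continuous_const)
  have hUself : ∀ y ∈ X, U y ∈ nhds y := by
    intro y _
    refine (hUopen y).mem_nhds ?_
    have := hABy y
    simp only [hU, Set.mem_setOf_eq]
    linarith
  obtain ⟨t, htX, hcover⟩ := hX.elim_nhds_subcover U hUself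
  have htne : t.Nonempty := by
    rcases Finset.eq_empty_or_nonempty t with rfl | h
    · exfalso
      obtain ⟨x, hx⟩ := hXne
      simpa using hcover hx
    · exact h
  -- package the finitely many affine pieces as a max-affine function
  obtain ⟨n, hn⟩ : ∃ n, t.card = n + 1 :=
    ⟨t.card - 1, (Nat.succ_pred_eq_of_pos (Finset.card_pos.2 htne)).symm⟩
  set e : Fin (n + 1) → EuclideanSpace ℝ (Fin d) :=
    fun i => t.equivFin.symm (Fin.cast hn.symm i) with he
  set a : Fin (n + 1) → EuclideanSpace ℝ (Fin d) := fun i => A (e i) with ha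
  set b : Fin (n + 1) → ℝ := fun i => B (e i) with hb
  set h : EuclideanSpace ℝ (Fin d) → ℝ := fun x => Finset.univ.sup' Finset.univ_nonempty
      (fun i : Fin (n + 1) => (inner ℝ (a i) x : ℝ) + b i) with hh
  refine ⟨h, ⟨n, a, b, fun x => rfl⟩, ?_⟩
  have hle : ∀ x, h x ≤ g x := by
    intro x
    exact Finset.sup'_le _ _ fun i _ => hAB (e i) x
  have hgt : ∀ x ∈ X, g x - δ < h x := by
    intro x hx
    obtain ⟨y, hy, hxy⟩ := Set.mem_iUnion₂.1 (hcover hx)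
    have hlt : g x - δ < (inner ℝ (A y) x : ℝ) + B y := hxy
    set i : Fin (n + 1) := Fin.cast hn (t.equivFin ⟨y, hy⟩) with hi
    have hei : e i = y := by
      simp [he, hi]
    calc g x - δ < (inner ℝ (a i) x : ℝ) + b i := by
          show g x - δ < (inner ℝ (A (e i)) x : ℝ) + B (e i)
          rw [hei]; exact hlt
      _ ≤ h x := Finset.le_sup'
          (fun i : Fin (n + 1) => (inner ℝ (a i) x : ℝ) + b i) (Finset.mem_univ i)
  -- the disagreement set is contained in `S k`
  refine lt_of_le_of_lt (measure_mono ?_) hk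
  intro x hx
  obtain ⟨hxX, hdis⟩ := hx
  have hhg := hle x
  have hxg : 0 < g x := by
    by_contra hng
    exact hdis ⟨fun hh0 => absurd (hh0.trans_le hhg) hng, fun hg0 => absurd hg0 hng⟩
  have hxh : ¬ (0 < h x) := fun hh0 => hdis ⟨fun _ => hxg, fun _ => hh0⟩
  refine ⟨hxX, hxg, ?_⟩
  have := hgt x hxX
  push_neg at hxh
  rw [hδdef] at this
  linarith
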